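/- Let γ : ℝ → ℝ² be a smooth unit-speed self-shrinking curve. Then 2H′(t) = H(t)·⟨γ(t), γ′(t)⟩ for all t, and consequently the function t ↦ H(t)² · e^{−|γ(t)|²/2} is constant on ℝ. -/

import Mathlib

noncomputable section
open Real MeasureTheory
open scoped RealInnerProductSpace

abbrev E2 := EuclideanSpace ℝ (Fin 2)

/-- The unit normal of a unit-speed plane curve: `γ′` rotated by `−π/2`. -/
def normal (γ : ℝ → E2) (t : ℝ) : E2 := WithLp.toLp 2 ![deriv γ t 1, -(deriv γ t 0)]

/-- The curvature `H = −⟨γ″, n⟩` of a unit-speed plane curve. -/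
def curv (γ : ℝ → E2) (t : ℝ) : ℝ := -⟪deriv (deriv γ) t, normal γ t⟫

lemma inner_E2 (a b : E2) : ⟪a, b⟫ = a 0 * b 0 + a 1 * b 1 := by
  simp [PiLp.inner_apply, Fin.sum_univ_two, RCLike.inner_apply, conj_trivial]
  ring

lemma hasDerivAt_proj {f : ℝ → E2} (hf : Differentiable ℝ f) (i : Fin 2) (t : ℝ) :
    HasDerivAt (fun s => f s i) (deriv f t i) t := by
  have h := (hf t).hasDerivAt
  have := (EuclideanSpace.proj (𝕜 := ℝ) i).hasFDerivAt.comp_hasDerivAt t h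
  exact this

/-- On a smooth unit-speed self-shrinking curve, `2H′ = H⟨γ, γ′⟩`, and
consequently `H² e^{−|γ|²/2}` is constant. -/
theorem stmt16 (γ : ℝ → E2) (hγ : ContDiff ℝ (⊤ : ℕ∞) γ)
    (hunit : ∀ t, ‖deriv γ t‖ = 1)
    (hshrink : ∀ t, curv γ t = ⟪γ t, normal γ t⟫ / 2) :
    (∀ t : ℝ, 2 * deriv (curv γ) t = curv γ t * ⟪γ t, deriv γ t⟫) ∧
    (∀ t s : ℝ,
      curv γ t ^ 2 * Real.exp (-‖γ t‖ ^ 2 / 2) = curv γ s ^ 2 * Real.exp (-‖γ s‖ ^ 2 / 2)) := by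
  have hdiff : Differentiable ℝ γ := hγ.differentiable (by simp)
  have hγ' : ContDiff ℝ (⊤ : ℕ∞) (deriv γ) := (contDiff_infty_iff_deriv.mp hγ).2
  have hdiff' : Differentiable ℝ (deriv γ) := hγ'.differentiable (by simp)
  have hx : ∀ t, HasDerivAt (fun s => γ s 0) (deriv γ t 0) t := hasDerivAt_proj hdiff 0
  have hy : ∀ t, HasDerivAt (fun s => γ s 1) (deriv γ t 1) t := hasDerivAt_proj hdiff 1
  have hpx : ∀ t, HasDerivAt (fun s => deriv γ s 0) (deriv (deriv γ) t 0) t :=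
    hasDerivAt_proj hdiff' 0
  have hpy : ∀ t, HasDerivAt (fun s => deriv γ s 1) (deriv (deriv γ) t 1) t :=
    hasDerivAt_proj hdiff' 1
  -- unit speed in coordinates
  have hunit' : ∀ t, deriv γ t 0 * deriv γ t 0 + deriv γ t 1 * deriv γ t 1 = 1 := by
    intro t
    have h : ⟪deriv γ t, deriv γ t⟫ = 1 := by
      rw [real_inner_self_eq_norm_sq, hunit t]; norm_num
    rw [inner_E2] at h
    exact h
  -- orthogonality ⟨γ′, γ″⟩ = 0
  have horth : ∀ t, deriv γ t 0 * deriv (deriv γ) t 0 + deriv γ t 1 * deriv (deriv γ) t 1 = 0 := by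
    intro t
    have h1 : HasDerivAt (fun s => deriv γ s 0 * deriv γ s 0 + deriv γ s 1 * deriv γ s 1)
        (deriv (deriv γ) t 0 * deriv γ t 0 + deriv γ t 0 * deriv (deriv γ) t 0 +
          (deriv (deriv γ) t 1 * deriv γ t 1 + deriv γ t 1 * deriv (deriv γ) t 1)) t :=
      ((hpx t).mul (hpx t)).add ((hpy t).mul (hpy t))
    have h2 : (fun s => deriv γ s 0 * deriv γ s 0 + deriv γ s 1 * deriv γ s 1)
        = fun _ => (1 : ℝ) := funext hunit'
    rw [h2] at h1
    have h3 := h1.unique (hasDerivAt_const t 1)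
    linarith
  -- curvature in coordinates
  have hcurv : ∀ t, curv γ t =
      deriv γ t 0 * deriv (deriv γ) t 1 - deriv (deriv γ) t 0 * deriv γ t 1 := by
    intro t
    rw [curv, inner_E2]
    simp [normal]
    ring
  -- self-shrinker in coordinates
  have hsh : ∀ t, curv γ t = (γ t 0 * deriv γ t 1 - γ t 1 * deriv γ t 0) / 2 := by
    intro t
    rw [hshrink t, inner_E2]
    simp [normal]
    ring
  -- γ″ = −H n in coordinates
  have hqx : ∀ t, deriv (deriv γ) t 0 = -(curv γ t) * deriv γ t 1 := by
    intro t
    rw [hcurv t]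
    linear_combination deriv γ t 0 * horth t - deriv (deriv γ) t 0 * hunit' t
  have hqy : ∀ t, deriv (deriv γ) t 1 = curv γ t * deriv γ t 0 := by
    intro t
    rw [hcurv t]
    linear_combination deriv γ t 1 * horth t - deriv (deriv γ) t 1 * hunit' t
  -- derivative of curvature
  have hH' : ∀ t, HasDerivAt (curv γ)
      (curv γ t * (γ t 0 * deriv γ t 0 + γ t 1 * deriv γ t 1) / 2) t := by
    intro t
    have h : HasDerivAt (fun s => (γ s 0 * deriv γ s 1 - γ s 1 * deriv γ s 0) / 2)
        ((deriv γ t 0 * deriv γ t 1 + γ t 0 * deriv (deriv γ) t 1 -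
          (deriv γ t 1 * deriv γ t 0 + γ t 1 * deriv (deriv γ) t 0)) / 2) t :=
      (((hx t).mul (hpy t)).sub ((hy t).mul (hpx t))).div_const 2
    have hfun : curv γ = fun s => (γ s 0 * deriv γ s 1 - γ s 1 * deriv γ s 0) / 2 :=
      funext hsh
    rw [hfun]
    convert h using 1
    rw [hqx t, hqy t, hsh t]
    ring
  refine ⟨?_, ?_⟩
  · intro t
    rw [(hH' t).deriv, inner_E2]
    ring
  · -- the conserved quantity
    have hnorm : ∀ t, ‖γ t‖ ^ 2 = γ t 0 * γ t 0 + γ t 1 * γ t 1 := by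
      intro t
      rw [← real_inner_self_eq_norm_sq, inner_E2]
    have hF : ∀ t, HasDerivAt
        (fun s => curv γ s ^ 2 * Real.exp (-‖γ s‖ ^ 2 / 2)) 0 t := by
      intro t
      have hfun : (fun s => curv γ s ^ 2 * Real.exp (-‖γ s‖ ^ 2 / 2))
          = fun s => curv γ s ^ 2 * Real.exp (-(γ s 0 * γ s 0 + γ s 1 * γ s 1) / 2) := by
        funext s; rw [hnorm s]
      rw [hfun]
      have hexp : HasDerivAt (fun s => Real.exp (-(γ s 0 * γ s 0 + γ s 1 * γ s 1) / 2))
          (Real.exp (-(γ t 0 * γ t 0 + γ t 1 * γ t 1) / 2) *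
            (-(deriv γ t 0 * γ t 0 + γ t 0 * deriv γ t 0 +
              (deriv γ t 1 * γ t 1 + γ t 1 * deriv γ t 1)) / 2)) t := by
        have hin : HasDerivAt (fun s => -(γ s 0 * γ s 0 + γ s 1 * γ s 1) / 2)
            (-(deriv γ t 0 * γ t 0 + γ t 0 * deriv γ t 0 +
              (deriv γ t 1 * γ t 1 + γ t 1 * deriv γ t 1)) / 2) t :=
          ((((hx t).mul (hx t)).add ((hy t).mul (hy t))).neg).div_const 2
        exact hin.exp
      have hsq : HasDerivAt (fun s => curv γ s ^ 2)
          (2 * curv γ t ^ 1 * (curv γ t * (γ t 0 * deriv γ t 0 + γ t 1 * deriv γ t 1) / 2)) t :=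
        (hH' t).pow 2
      have := hsq.mul hexp
      refine this.congr_deriv ?_
      ring
    have hd : Differentiable ℝ (fun s => curv γ s ^ 2 * Real.exp (-‖γ s‖ ^ 2 / 2)) :=
      fun t => (hF t).differentiableAt
    have h0 : ∀ t, deriv (fun s => curv γ s ^ 2 * Real.exp (-‖γ s‖ ^ 2 / 2)) t = 0 :=
      fun t => (hF t).deriv
    intro t s
    exact is_const_of_deriv_eq_zero hd h0 t s
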